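/- Let G be a group, K ≤ G a subgroup, P ≤ G a subgroup with G = PK (Iwasawa-type decomposition). Suppose measures are normalized so that K and K∩P have measure 1 and dg = dp dk. Then restriction of functions from G to P defines an algebra homomorphism from the K-bi-invariant Hecke algebra H(G//K) to H(P//K∩P): for φ right-K-invariant and ψ K-bi-invariant, (φ*ψ)|_P = (φ|_P)*(ψ|_P). -/

import Mathlib

open MeasureTheory

/-!
STATEMENT 4: Let `G` be a group, `K` compact open, `P` a closed subgroup with the
Iwasawa decomposition `G = PK`, and Haar measures normalized so that `K` and `K ∩ P`
have measure `1` and `dg = dp dk`.  Then restriction of functions to `P` is an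
algebra homomorphism `H(G//K) → H(P//K∩P)`: for `φ` right-`K`-invariant and `ψ`
`K`-bi-invariant, `(φ*ψ)|_P = (φ|_P)*(ψ|_P)`.
-/

theorem stmt4 {G : Type*} [Group G] [TopologicalSpace G] [IsTopologicalGroup G]
    [MeasurableSpace G] [BorelSpace G] [LocallyCompactSpace G]
    [TotallyDisconnectedSpace G]
    (K P : Subgroup G) (hKc : IsCompact (K : Set G)) (hKo : IsOpen (K : Set G))
    (hP : IsClosed (P : Set G))
    (hIwasawa : ∀ g : G, ∃ p ∈ P, ∃ k ∈ K, g = p * k)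
    (μG : Measure G) [μG.IsMulLeftInvariant] (hμGK : μG (K : Set G) = 1)
    (μP : Measure P) [μP.IsMulLeftInvariant] (hμPK : μP {x : P | (x : G) ∈ K} = 1)
    (μK : Measure K) [μK.IsMulLeftInvariant] (hμK : μK Set.univ = 1)
    (hFubini : ∀ f : G → ℝ, Continuous f → HasCompactSupport f →
      ∫ g, f g ∂μG = ∫ p : P, (∫ k : K, f ((p : G) * (k : G)) ∂μK) ∂μP)
    (φ ψ : G → ℝ) (hφ : Continuous φ) (hφc : HasCompactSupport φ)
    (hψ : Continuous ψ) (hψc : HasCompactSupport ψ)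
    (hφK : ∀ g : G, ∀ k ∈ K, φ (g * k) = φ g)
    (hψK : ∀ g : G, ∀ k ∈ K, ψ (g * k) = ψ g ∧ ψ (k * g) = ψ g)
    (p₀ : P) :
    (∫ a, φ a * ψ (a⁻¹ * (p₀ : G)) ∂μG)
      = ∫ p : P, φ (p : G) * ψ (((p : G))⁻¹ * (p₀ : G)) ∂μP := by
  have hcont : Continuous fun g : G => φ g * ψ (g⁻¹ * (p₀ : G)) := by
    exact hφ.mul (hψ.comp (by continuity))
  have hsupp : HasCompactSupport fun g : G => φ g * ψ (g⁻¹ * (p₀ : G)) :=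
    hφc.mul_right
  have h := hFubini _ hcont hsupp
  rw [h]
  refine integral_congr_ae (Filter.Eventually.of_forall fun p => ?_)
  have hinner : ∀ k : K, φ ((p : G) * (k : G)) * ψ (((p : G) * (k : G))⁻¹ * (p₀ : G))
      = φ (p : G) * ψ (((p : G))⁻¹ * (p₀ : G)) := by
    intro k
    have h1 : φ ((p : G) * (k : G)) = φ (p : G) := hφK _ _ k.2
    have h2 : ψ (((p : G) * (k : G))⁻¹ * (p₀ : G))
        = ψ (((p : G))⁻¹ * (p₀ : G)) := by
      have : ((p : G) * (k : G))⁻¹ * (p₀ : G)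
          = (k : G)⁻¹ * (((p : G))⁻¹ * (p₀ : G)) := by group
      rw [this]
      exact (hψK _ _ (inv_mem k.2)).2
    rw [h1, h2]
  simp only [hinner, integral_const, measureReal_def, hμK, ENNReal.toReal_one, one_smul,
    measure_univ_of_isAddLeftInvariant]
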